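/- For an exact-line-search steepest descent step on a strongly convex quadratic with Hessian A having condition number κ = λₙ/λ₁, the error contraction in the A-norm satisfies ‖x_{k+1} - x*‖_A ≤ ((κ-1)/(κ+1)) ‖x_k - x*‖_A. -/

import Mathlib

open Matrix

set_option maxHeartbeats 1000000 in
/-- Error contraction of exact-line-search steepest descent in the A-norm with
factor (κ-1)/(κ+1), κ = λₙ/λ₁. -/
theorem sd_error_contraction {n : ℕ}
    (A : Matrix (Fin n) (Fin n) ℝ) (hA : A.PosDef) (b : Fin n → ℝ)
    (lam1 lamn : ℝ) (hlam1 : 0 < lam1) (hle : lam1 ≤ lamn)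
    (hR1 : ∀ v : Fin n → ℝ, lam1 * (v ⬝ᵥ v) ≤ v ⬝ᵥ (A *ᵥ v))
    (hRn : ∀ v : Fin n → ℝ, v ⬝ᵥ (A *ᵥ v) ≤ lamn * (v ⬝ᵥ v))
    (x g : Fin n → ℝ) (hg : g = A *ᵥ x + b)
    (x' : Fin n → ℝ)
    (hx' : x' = if g = 0 then x else x - ((g ⬝ᵥ g) / (g ⬝ᵥ (A *ᵥ g))) • g)
    (xs : Fin n → ℝ) (hxs : xs = -(A⁻¹ *ᵥ b)) :
    Real.sqrt ((x' - xs) ⬝ᵥ (A *ᵥ (x' - xs)))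
      ≤ ((lamn / lam1 - 1) / (lamn / lam1 + 1)) *
          Real.sqrt ((x - xs) ⬝ᵥ (A *ᵥ (x - xs))) := by
  have hlamn : 0 < lamn := lt_of_lt_of_le hlam1 hle
  have hsum : 0 < lamn + lam1 := by linarith
  -- the contraction constant
  have hC : (lamn / lam1 - 1) / (lamn / lam1 + 1) = (lamn - lam1) / (lamn + lam1) := by
    rw [div_sub_one hlam1.ne', div_add_one hlam1.ne', div_div_div_cancel_right₀]
    exact hlam1.ne'
  have hc0 : 0 ≤ (lamn - lam1) / (lamn + lam1) :=
    div_nonneg (by linarith) hsum.le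
  have hAinvb : A *ᵥ (A⁻¹ *ᵥ b) = b := by
    rw [Matrix.mulVec_mulVec, Matrix.mul_nonsing_inv _ (isUnit_iff_ne_zero.mpr hA.det_pos.ne'),
      Matrix.one_mulVec]
  set w : Fin n → ℝ := x - xs with hw
  have hgw : g = A *ᵥ w := by
    rw [hg, hw, hxs, sub_neg_eq_add, Matrix.mulVec_add, hAinvb]
  have hAT : Aᵀ = A := by
    rw [← Matrix.conjTranspose_eq_transpose_of_trivial]; exact hA.1
  have hsym : ∀ u v : Fin n → ℝ, u ⬝ᵥ (A *ᵥ v) = v ⬝ᵥ (A *ᵥ u) := by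
    intro u v
    rw [Matrix.dotProduct_mulVec, ← Matrix.mulVec_transpose, hAT, dotProduct_comm]
  have hposdef : ∀ v : Fin n → ℝ, v ≠ 0 → 0 < v ⬝ᵥ (A *ᵥ v) := by
    intro v hv
    simpa using hA.dotProduct_mulVec_pos hv
  rw [hC]
  by_cases hg0 : g = 0
  · -- gradient zero: x' = x, and x = x*
    rw [hx', if_pos hg0]
    have hw0 : w = 0 := by
      by_contra hw0
      exact absurd (hgw.symm.trans hg0) (fun h => (hposdef w hw0).ne' (by rw [h, dotProduct_zero]))
    have : (x - xs) ⬝ᵥ (A *ᵥ (x - xs)) = 0 := by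
      rw [← hw, hw0]; simp
    rw [this, Real.sqrt_zero, mul_zero]
  · -- main case
    set s : ℝ := g ⬝ᵥ g with hs_def
    set a : ℝ := g ⬝ᵥ (A *ᵥ g) with ha_def
    set m : ℝ := w ⬝ᵥ w with hm_def
    set h : ℝ := w ⬝ᵥ (A *ᵥ w) with hh_def
    have hw0 : w ≠ 0 := by
      intro hw0; apply hg0; rw [hgw, hw0, Matrix.mulVec_zero]
    have ha : 0 < a := hposdef g hg0
    have hhpos : 0 < h := hposdef w hw0
    have hsnn : 0 ≤ s := by
      rw [hs_def, dotProduct]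
      exact Finset.sum_nonneg fun i _ => mul_self_nonneg (g i)
    have hspos : 0 < s :=
      hsnn.lt_of_ne fun h' => hg0 (dotProduct_self_eq_zero.mp h'.symm)
    have hwg : w ⬝ᵥ g = h := by rw [hh_def, hgw]
    have hgw' : g ⬝ᵥ w = h := by rw [dotProduct_comm, hwg]
    have hwAg : w ⬝ᵥ (A *ᵥ g) = s := by rw [hsym, ← hgw, hs_def]
    have hgAw : g ⬝ᵥ (A *ᵥ w) = s := by rw [← hgw, hs_def]
    -- expansion lemmas
    have expandA : ∀ c d : ℝ, (c • w + d • g) ⬝ᵥ (A *ᵥ (c • w + d • g))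
        = c ^ 2 * h + 2 * c * d * s + d ^ 2 * a := by
      intro c d
      simp only [Matrix.mulVec_add, Matrix.mulVec_smul, dotProduct_add, add_dotProduct,
        dotProduct_smul, smul_dotProduct, smul_eq_mul, hwAg, hgAw, ← hh_def, ← ha_def]
      ring
    have expandI : ∀ c d : ℝ, (c • w + d • g) ⬝ᵥ (c • w + d • g)
        = c ^ 2 * m + 2 * c * d * h + d ^ 2 * s := by
      intro c d
      simp only [dotProduct_add, add_dotProduct, dotProduct_smul, smul_dotProduct,
        smul_eq_mul, hwg, hgw', ← hm_def, ← hs_def]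
      ring
    -- key scalar inequalities
    have K1 := hR1 (lamn • w + (-1 : ℝ) • g)
    rw [expandA, expandI] at K1
    have K2 := hRn ((-lam1) • w + (1 : ℝ) • g)
    rw [expandA, expandI] at K2
    have Rg1 := hR1 g; rw [← hs_def, ← ha_def] at Rg1
    have Rgn := hRn g; rw [← hs_def, ← ha_def] at Rgn
    have Rw1 := hR1 w; rw [← hm_def, ← hh_def] at Rw1
    have Rwn := hRn w; rw [← hm_def, ← hh_def] at Rwn
    -- Kantorovich-type inequality
    have hK : a + lam1 * lamn * h ≤ (lam1 + lamn) * s := by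
      rcases eq_or_lt_of_le hle with heq | hlt
      · -- degenerate case lam1 = lamn
        subst heq
        have hsh : lam1 * h ≤ s := by nlinarith
        nlinarith
      · nlinarith [mul_le_mul_of_nonneg_left K1 hlam1.le,
          mul_le_mul_of_nonneg_left K2 hlamn.le, mul_pos hlam1 hlamn,
          mul_pos (mul_pos hlam1 hlamn) hhpos]
    -- the squared contraction bound
    have key : 4 * lam1 * lamn * (h * a) ≤ (lam1 + lamn) ^ 2 * s ^ 2 := by
      have hnn : 0 ≤ a + lam1 * lamn * h := by positivity
      have h1 : (a + lam1 * lamn * h) ^ 2 ≤ ((lam1 + lamn) * s) ^ 2 :=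
        pow_le_pow_left₀ hnn hK 2
      nlinarith [h1, sq_nonneg (a - lam1 * lamn * h)]
    -- value of the new error
    have hx's : x' - xs = w - (s / a) • g := by
      rw [hx', if_neg hg0, hw, sub_right_comm]
    have hL : (x' - xs) ⬝ᵥ (A *ᵥ (x' - xs)) = h - s ^ 2 / a := by
      have : w - (s / a) • g = (1 : ℝ) • w + (-(s / a)) • g := by
        simp [sub_eq_add_neg, neg_smul]
      rw [hx's, this, expandA]
      field_simp
      ring
    have hL2 : h - s ^ 2 / a ≤ ((lamn - lam1) / (lamn + lam1)) ^ 2 * h := by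
      rw [div_pow, div_mul_eq_mul_div, sub_le_iff_le_add, ← sub_le_iff_le_add',
        sub_div' (by positivity : (lamn + lam1) ^ 2 ≠ 0), div_le_div_iff₀ (by positivity) ha]
      nlinarith [key]
    have hLnonneg : 0 ≤ h - s ^ 2 / a := by
      rw [← hL]
      rcases eq_or_ne (x' - xs) 0 with h0 | h0
      · rw [h0]; simp
      · exact (hposdef _ h0).le
    calc Real.sqrt ((x' - xs) ⬝ᵥ (A *ᵥ (x' - xs)))
        ≤ Real.sqrt (((lamn - lam1) / (lamn + lam1)) ^ 2 * h) := by
          rw [hL]; exact Real.sqrt_le_sqrt hL2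
      _ = (lamn - lam1) / (lamn + lam1) * Real.sqrt h := by
          rw [Real.sqrt_mul (sq_nonneg _), Real.sqrt_sq hc0]
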